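/- Let f, g : ℝ → ℝ be strictly convex functions with minimizers y_f = argmin f and y_g = argmin g satisfying y_f ≥ y_g. Then for any z ≤ z' there exists θ ∈ ℝ with z ≤ θ ≤ z' (or θ in the interval [y_g, y_f]) such that f(θ) + g(θ) ≤ f(z) + g(z'). Hence the minimum of f(z) + g(z') subject to z ≤ z' is attained with z = z'. -/

import Mathlib

lemma aux_left (f : ℝ → ℝ) (hf : StrictConvexOn ℝ Set.univ f)
    (y : ℝ) (hy : ∀ z, f y ≤ f z) {a b : ℝ} (hab : a ≤ b) (hb : b ≤ y) :
    f b ≤ f a := by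
  rcases eq_or_lt_of_le hab with rfl | hab
  · exact le_rfl
  rcases eq_or_lt_of_le hb with rfl | hb
  · exact hy a
  have hay : a < y := hab.trans hb
  set t : ℝ := (y - b) / (y - a) with ht
  set s : ℝ := (b - a) / (y - a) with hs
  have hya : (0:ℝ) < y - a := by linarith
  have htpos : 0 < t := div_pos (by linarith) hya
  have hspos : 0 < s := div_pos (by linarith) hya
  have hts : t + s = 1 := by
    rw [ht, hs, ← add_div]
    rw [show y - b + (b - a) = y - a by ring, div_self hya.ne']
  have hcomb : t • a + s • y = b := by
    simp only [smul_eq_mul, ht, hs]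
    field_simp
    ring
  have h1 := hf.2 (Set.mem_univ a) (Set.mem_univ y) (ne_of_lt hay) htpos hspos hts
  rw [hcomb] at h1
  have h3 : s • f y ≤ s • f a := smul_le_smul_of_nonneg_left (hy a) hspos.le
  have h2 : t • f a + s • f a = f a := by rw [← add_smul, hts, one_smul]
  simp only [smul_eq_mul] at h1 h2 h3 ⊢
  linarith

lemma aux_right (f : ℝ → ℝ) (hf : StrictConvexOn ℝ Set.univ f)
    (y : ℝ) (hy : ∀ z, f y ≤ f z) {a b : ℝ} (hab : a ≤ b) (ha : y ≤ a) :
    f a ≤ f b := by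
  rcases eq_or_lt_of_le hab with rfl | hab
  · exact le_rfl
  rcases eq_or_lt_of_le ha with rfl | ha
  · exact hy b
  have hyb : y < b := ha.trans hab
  set t : ℝ := (b - a) / (b - y) with ht
  set s : ℝ := (a - y) / (b - y) with hs
  have hby : (0:ℝ) < b - y := by linarith
  have htpos : 0 < t := div_pos (by linarith) hby
  have hspos : 0 < s := div_pos (by linarith) hby
  have hts : t + s = 1 := by
    rw [ht, hs, ← add_div]
    rw [show b - a + (a - y) = b - y by ring, div_self hby.ne']
  have hcomb : t • y + s • b = a := by
    simp only [smul_eq_mul, ht, hs]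
    field_simp
    ring
  have h1 := hf.2 (Set.mem_univ y) (Set.mem_univ b) (ne_of_lt hyb) htpos hspos hts
  rw [hcomb] at h1
  have h3 : t • f y ≤ t • f b := smul_le_smul_of_nonneg_left (hy b) htpos.le
  have h2 : t • f b + s • f b = f b := by rw [← add_smul, hts, one_smul]
  simp only [smul_eq_mul] at h1 h2 h3 ⊢
  linarith

/-- for strictly convex `f, g` with minimizers in reversed order,
the minimum of `f z + g z'` subject to `z ≤ z'` is attained on the diagonal. -/
theorem stmt_1 (f g : ℝ → ℝ)
    (hf : StrictConvexOn ℝ Set.univ f) (hg : StrictConvexOn ℝ Set.univ g)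
    (yf yg : ℝ) (hyf : ∀ z, f yf ≤ f z) (hyg : ∀ z, g yg ≤ g z)
    (hy : yg ≤ yf) (z z' : ℝ) (hz : z ≤ z') :
    ∃ θ : ℝ, ((z ≤ θ ∧ θ ≤ z') ∨ (yg ≤ θ ∧ θ ≤ yf)) ∧
      f θ + g θ ≤ f z + g z' := by
  set θ := max z yg with hθ
  have hzθ : z ≤ θ := le_max_left _ _
  have hygθ : yg ≤ θ := le_max_right _ _
  have hfθ : f θ ≤ f z := by
    rcases le_or_gt z yf with h | h
    · exact aux_left f hf yf hyf hzθ (max_le h hy)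
    · have : θ = z := max_eq_left (by linarith)
      rw [this]
  have hgθ : g θ ≤ g z' := by
    rcases le_or_gt θ z' with h | h
    · exact aux_right g hg yg hyg h hygθ
    · have hθeq : θ = yg := by
        rcases le_total z yg with hc | hc
        · exact max_eq_right hc
        · exact absurd h (not_lt.2 (le_of_eq_of_le (max_eq_left hc) hz))
      rw [hθeq]; exact hyg z'
  refine ⟨θ, ?_, by linarith⟩
  rcases le_or_gt θ z' with h | h
  · exact Or.inl ⟨hzθ, h⟩
  · have hθeq : θ = yg := by
      rcases le_total z yg with hc | hc
      · exact max_eq_right hc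
      · exact absurd h (not_lt.2 (le_of_eq_of_le (max_eq_left hc) hz))
    exact Or.inr ⟨hθeq.ge, hθeq ▸ hy⟩
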